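/- For any nonzero polynomial f in two complex variables, every subgradient of the Ronkin function N_f lies in the Newton polygon: if x, v ∈ ℝ² satisfy N_f(y) ≥ N_f(x) + ⟨v, y − x⟩ for all y ∈ ℝ², then v ∈ Δ. -/

import Mathlib

open MeasureTheory

/-- Evaluation of a polynomial in two variables at `(z₁, z₂)`. -/
noncomputable def mvEval (f : MvPolynomial (Fin 2) ℂ) (z₁ z₂ : ℂ) : ℂ :=
  MvPolynomial.eval (fun i : Fin 2 => if i = 0 then z₁ else z₂) f

/-- The Newton polygon of `f`: the convex hull of the exponent vectors of the
monomials appearing in `f` with nonzero coefficient. -/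
noncomputable def newtonPolygon (f : MvPolynomial (Fin 2) ℂ) : Set (ℝ × ℝ) :=
  convexHull ℝ ((fun d : Fin 2 →₀ ℕ => ((d 0 : ℝ), (d 1 : ℝ))) '' (f.support : Set (Fin 2 →₀ ℕ)))

/-- The Ronkin function of `f`. -/
noncomputable def ronkin (f : MvPolynomial (Fin 2) ℂ) (x : ℝ × ℝ) : ℝ :=
  (2 * Real.pi) ^ (-2 : ℤ) *
    ∫ θ in Set.Icc ((0, 0) : ℝ × ℝ) (2 * Real.pi, 2 * Real.pi),
      Real.log (‖mvEval f (Complex.exp (x.1 + θ.1 * Complex.I))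
        (Complex.exp (x.2 + θ.2 * Complex.I))‖)

section RonkinAux

open Filter

lemma mvEval_eq (f : MvPolynomial (Fin 2) ℂ) (z₁ z₂ : ℂ) :
    mvEval f z₁ z₂ = ∑ d ∈ f.support, MvPolynomial.coeff d f * (z₁ ^ d 0 * z₂ ^ d 1) := by
  rw [mvEval, MvPolynomial.eval_eq']
  refine Finset.sum_congr rfl fun d _ => ?_
  rw [Fin.prod_univ_two]
  simp

/-- The integration box. -/
noncomputable def rbox : Set (ℝ × ℝ) := Set.Icc ((0, 0) : ℝ × ℝ) (2 * Real.pi, 2 * Real.pi)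

/-- The Ronkin integrand. -/
noncomputable def rInt (f : MvPolynomial (Fin 2) ℂ) (x θ : ℝ × ℝ) : ℝ :=
  Real.log (‖mvEval f (Complex.exp (x.1 + θ.1 * Complex.I))
        (Complex.exp (x.2 + θ.2 * Complex.I))‖)

lemma ronkin_eq (f : MvPolynomial (Fin 2) ℂ) (x : ℝ × ℝ) :
    ronkin f x = (2 * Real.pi) ^ (-2 : ℤ) * ∫ θ in rbox, rInt f x θ := rfl

lemma rbox_vol : volume rbox = ENNReal.ofReal (2 * Real.pi) * ENNReal.ofReal (2 * Real.pi) := by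
  rw [rbox, ← Set.Icc_prod_Icc, Measure.volume_eq_prod, Measure.prod_prod, Real.volume_Icc,
    sub_zero]

lemma rbox_vol_toReal : (volume rbox).toReal = (2 * Real.pi) ^ 2 := by
  rw [rbox_vol, ENNReal.toReal_mul, ENNReal.toReal_ofReal (by positivity)]
  ring

lemma rbox_vol_lt_top : volume rbox < ⊤ := by
  rw [rbox_vol]; exact ENNReal.mul_lt_top ENNReal.ofReal_lt_top ENNReal.ofReal_lt_top

lemma ronkin_le (f : MvPolynomial (Fin 2) ℂ) (x : ℝ × ℝ) (B : ℝ)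
    (hInt : IntegrableOn (rInt f x) rbox) (hB : ∀ θ ∈ rbox, rInt f x θ ≤ B) :
    ronkin f x ≤ B := by
  have hmeas : MeasurableSet rbox := measurableSet_Icc
  have hconst : IntegrableOn (fun _ : ℝ × ℝ => B) rbox :=
    integrableOn_const rbox_vol_lt_top.ne
  have hle : ∫ θ in rbox, rInt f x θ ≤ ∫ _ in rbox, B :=
    setIntegral_mono_on hInt hconst hmeas hB
  rw [setIntegral_const, smul_eq_mul, measureReal_def, rbox_vol_toReal] at hle
  rw [ronkin_eq]
  have hpos : (0:ℝ) < (2 * Real.pi) ^ (-2 : ℤ) := by positivity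
  calc (2 * Real.pi) ^ (-2 : ℤ) * ∫ θ in rbox, rInt f x θ
      ≤ (2 * Real.pi) ^ (-2 : ℤ) * ((2 * Real.pi) ^ 2 * B) := by
        exact mul_le_mul_of_nonneg_left hle hpos.le
    _ = B := by
        have h2 : ((2 * Real.pi : ℝ)) ^ (-2 : ℤ) = ((2 * Real.pi) ^ 2)⁻¹ := by
          rw [zpow_neg, zpow_two, sq]
        rw [h2, ← mul_assoc, inv_mul_cancel₀ (by positivity : ((2 * Real.pi) ^ 2 : ℝ) ≠ 0), one_mul]

lemma rInt_measurable (f : MvPolynomial (Fin 2) ℂ) (x : ℝ × ℝ) : Measurable (rInt f x) := by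
  have hc : Continuous (fun θ : ℝ × ℝ => mvEval f (Complex.exp (x.1 + θ.1 * Complex.I))
      (Complex.exp (x.2 + θ.2 * Complex.I))) := by
    have h1 : Continuous (fun θ : ℝ × ℝ => Complex.exp (x.1 + θ.1 * Complex.I)) := by
      continuity
    have h2 : Continuous (fun θ : ℝ × ℝ => Complex.exp (x.2 + θ.2 * Complex.I)) := by
      continuity
    simp only [mvEval_eq]
    exact continuous_finset_sum _ fun d _ =>
      continuous_const.mul ((h1.pow _).mul (h2.pow _))
  exact Real.measurable_log.comp ((continuous_norm.comp hc).measurable)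

lemma rInt_integrableOn (f : MvPolynomial (Fin 2) ℂ) (x : ℝ × ℝ) (L U : ℝ)
    (hL : ∀ θ ∈ rbox, L ≤ rInt f x θ) (hU : ∀ θ ∈ rbox, rInt f x θ ≤ U) :
    IntegrableOn (rInt f x) rbox := by
  have hvol : volume rbox < ⊤ := rbox_vol_lt_top
  refine Integrable.mono' (g := fun _ => max |L| |U|)
    (integrableOn_const hvol.ne) ((rInt_measurable f x).aestronglyMeasurable) ?_
  refine (ae_restrict_iff' measurableSet_Icc).2 (Filter.Eventually.of_forall fun θ hθ => ?_)
  rw [Real.norm_eq_abs, abs_le]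
  constructor
  · have := hL θ hθ
    have h1 : -|L| ≤ L := neg_abs_le L
    nlinarith [le_max_left |L| |U|]
  · have := hU θ hθ
    have h2 : U ≤ |U| := le_abs_self U
    nlinarith [le_max_right |L| |U|]

/-- The pairing of an exponent vector with a real vector. -/
noncomputable def dotd (d : Fin 2 →₀ ℕ) (y : ℝ × ℝ) : ℝ := (d 0 : ℝ) * y.1 + (d 1 : ℝ) * y.2

lemma abs_term (d : Fin 2 →₀ ℕ) (c : ℂ) (y : ℝ × ℝ) (z₁ z₂ : ℂ)
    (h1 : ‖z₁‖ = Real.exp y.1) (h2 : ‖z₂‖ = Real.exp y.2) :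
    ‖c * (z₁ ^ d 0 * z₂ ^ d 1)‖ = ‖c‖ * Real.exp (dotd d y) := by
  rw [norm_mul, norm_mul, norm_pow, norm_pow, h1, h2, ← Real.exp_nat_mul, ← Real.exp_nat_mul,
    ← Real.exp_add, dotd]

lemma abs_exp_arg (a b : ℝ) : ‖Complex.exp (a + b * Complex.I)‖ = Real.exp a := by
  rw [Complex.norm_exp]
  simp

lemma abs_eval_le (f : MvPolynomial (Fin 2) ℂ) (y : ℝ × ℝ) (z₁ z₂ : ℂ)
    (h1 : ‖z₁‖ = Real.exp y.1) (h2 : ‖z₂‖ = Real.exp y.2) :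
    ‖mvEval f z₁ z₂‖ ≤
      ∑ d ∈ f.support, ‖MvPolynomial.coeff d f‖ * Real.exp (dotd d y) := by
  rw [mvEval_eq]
  refine le_trans (norm_sum_le _ _) (le_of_eq ?_)
  refine Finset.sum_congr rfl fun d _ => ?_
  rw [abs_term d _ y z₁ z₂ h1 h2]

lemma abs_eval_ge (f : MvPolynomial (Fin 2) ℂ) (a : Fin 2 →₀ ℕ) (ha : a ∈ f.support)
    (y : ℝ × ℝ) (z₁ z₂ : ℂ)
    (h1 : ‖z₁‖ = Real.exp y.1) (h2 : ‖z₂‖ = Real.exp y.2) :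
    ‖MvPolynomial.coeff a f‖ * Real.exp (dotd a y)
      - ∑ d ∈ f.support.erase a, ‖MvPolynomial.coeff d f‖ * Real.exp (dotd d y)
      ≤ ‖mvEval f z₁ z₂‖ := by
  rw [mvEval_eq, ← Finset.add_sum_erase _ _ ha]
  have hrest : ‖∑ d ∈ f.support.erase a, MvPolynomial.coeff d f * (z₁ ^ d 0 * z₂ ^ d 1)‖
      ≤ ∑ d ∈ f.support.erase a, ‖MvPolynomial.coeff d f‖ * Real.exp (dotd d y) := by
    refine le_trans (norm_sum_le _ _) (le_of_eq ?_)
    refine Finset.sum_congr rfl fun d _ => ?_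
    rw [abs_term d _ y z₁ z₂ h1 h2]
  calc ‖MvPolynomial.coeff a f‖ * Real.exp (dotd a y)
        - ∑ d ∈ f.support.erase a, ‖MvPolynomial.coeff d f‖ * Real.exp (dotd d y)
      ≤ ‖MvPolynomial.coeff a f * (z₁ ^ a 0 * z₂ ^ a 1)‖
        - ‖∑ d ∈ f.support.erase a, MvPolynomial.coeff d f * (z₁ ^ d 0 * z₂ ^ d 1)‖ := by
        rw [abs_term a _ y z₁ z₂ h1 h2]
        linarith
    _ ≤ ‖MvPolynomial.coeff a f * (z₁ ^ a 0 * z₂ ^ a 1)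
          + ∑ d ∈ f.support.erase a, MvPolynomial.coeff d f * (z₁ ^ d 0 * z₂ ^ d 1)‖ := by
        set A := MvPolynomial.coeff a f * (z₁ ^ a 0 * z₂ ^ a 1)
        set S := ∑ d ∈ f.support.erase a, MvPolynomial.coeff d f * (z₁ ^ d 0 * z₂ ^ d 1)
        have h3 : ‖(A + S) + (-S)‖ ≤ ‖A + S‖ + ‖-S‖ :=
          norm_add_le _ _
        rw [add_neg_cancel_right, norm_neg] at h3
        linarith

lemma sep_lemma (s : Set (ℝ × ℝ)) (hconv : Convex ℝ s) (hcl : IsClosed s) (v : ℝ × ℝ)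
    (hv : v ∉ s) : ∃ u : ℝ × ℝ, ∀ b ∈ s, b.1 * u.1 + b.2 * u.2 < v.1 * u.1 + v.2 * u.2 := by
  obtain ⟨φ, c, hlt, hv⟩ := geometric_hahn_banach_closed_point hconv hcl hv
  refine ⟨(φ (1, 0), φ (0, 1)), fun b hb => ?_⟩
  have key : ∀ w : ℝ × ℝ, φ w = w.1 * φ (1, 0) + w.2 * φ (0, 1) := by
    intro w
    have : w = w.1 • ((1 : ℝ), (0 : ℝ)) + w.2 • ((0 : ℝ), (1 : ℝ)) := by
      simp [Prod.ext_iff]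
    rw [this, map_add, ContinuousLinearMap.map_smul, ContinuousLinearMap.map_smul, smul_eq_mul, smul_eq_mul]
    simp
  nlinarith [key b, key v, hlt b hb]

lemma dotd_inj (d d' : Fin 2 →₀ ℕ)
    (h : dotd d (1, Real.sqrt 2) = dotd d' (1, Real.sqrt 2)) : d = d' := by
  simp only [dotd] at h
  have h2 : ((d 1 : ℝ) - d' 1) * Real.sqrt 2 = (d' 0 : ℝ) - d 0 := by ring_nf; ring_nf at h; linarith
  by_cases hd : d 1 = d' 1
  · have h0 : (d 0 : ℝ) = d' 0 := by rw [hd] at h2; simp at h2; linarith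
    have : d 0 = d' 0 := Nat.cast_injective h0
    ext i
    fin_cases i
    · exact this
    · exact hd
  · exfalso
    have hne : ((d 1 : ℝ)) - d' 1 ≠ 0 := by
      intro hc
      exact hd (Nat.cast_injective (by linarith : ((d 1 : ℝ)) = d' 1))
    have : Real.sqrt 2 = ((d' 0 : ℝ) - d 0) / ((d 1 : ℝ) - d' 1) := by
      field_simp at h2 ⊢; linarith
    apply irrational_sqrt_two
    rw [this]
    refine ⟨((d' 0 : ℚ) - d 0) / ((d 1 : ℚ) - d' 1), ?_⟩
    push_cast
    ring

lemma exists_dir (S : Finset (Fin 2 →₀ ℕ)) (hS : S.Nonempty) (v u₀ : ℝ × ℝ)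
    (hsep : ∀ d ∈ S, dotd d u₀ < v.1 * u₀.1 + v.2 * u₀.2) :
    ∃ u : ℝ × ℝ, ∃ a ∈ S, (∀ d ∈ S, d ≠ a → dotd d u < dotd a u) ∧
      dotd a u < v.1 * u.1 + v.2 * u.2 := by
  classical
  set w : ℝ × ℝ := (1, Real.sqrt 2) with hw
  set m := S.sup' hS (fun d => dotd d u₀) with hm
  set T := S.filter (fun d => dotd d u₀ = m) with hT
  obtain ⟨b, hbS, hbm⟩ := Finset.exists_mem_eq_sup' hS (fun d => dotd d u₀)
  have hTne : T.Nonempty := ⟨b, Finset.mem_filter.2 ⟨hbS, hbm.symm⟩⟩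
  obtain ⟨a, haT, ha⟩ := Finset.exists_max_image T (fun d => dotd d w) hTne
  have haS : a ∈ S := (Finset.mem_filter.1 haT).1
  have ham : dotd a u₀ = m := (Finset.mem_filter.1 haT).2
  set uε : ℝ → ℝ × ℝ := fun ε => (u₀.1 + ε * w.1, u₀.2 + ε * w.2) with huε
  have hdot : ∀ d ε, dotd d (uε ε) = dotd d u₀ + ε * dotd d w := by
    intro d ε; simp only [dotd, huε]; ring
  have hev1 : ∀ d ∈ S, ∀ᶠ ε in nhdsWithin (0:ℝ) (Set.Ioi 0),
      d ≠ a → dotd d (uε ε) < dotd a (uε ε) := by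
    intro d hdS
    by_cases hdT : d ∈ T
    · filter_upwards [self_mem_nhdsWithin] with ε hε hda
      have h1 : dotd d w < dotd a w := by
        rcases lt_or_eq_of_le (ha d hdT) with h | h
        · exact h
        · exact absurd (dotd_inj d a h) hda
      have h2 : dotd d u₀ = dotd a u₀ := by
        rw [(Finset.mem_filter.1 hdT).2, ham]
      rw [hdot, hdot, h2]
      have : (0:ℝ) < ε := hε
      nlinarith
    · have hlt : dotd d u₀ < dotd a u₀ := by
        rw [ham]
        rcases lt_or_eq_of_le (Finset.le_sup' (fun d => dotd d u₀) hdS) with h | h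
        · exact h
        · exact absurd (Finset.mem_filter.2 ⟨hdS, h.trans hm.symm⟩) hdT
      have htend : Tendsto (fun ε : ℝ => (dotd a (uε ε)) - dotd d (uε ε)) (nhds 0)
          (nhds (dotd a u₀ - dotd d u₀)) := by
        simp only [hdot]
        have : Continuous (fun ε : ℝ => dotd a u₀ + ε * dotd a w - (dotd d u₀ + ε * dotd d w)) := by
          continuity
        have := this.tendsto 0
        simpa using this
      have := htend.eventually_const_lt (by linarith : (0:ℝ) < dotd a u₀ - dotd d u₀)
      filter_upwards [this.filter_mono nhdsWithin_le_nhds] with ε hε _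
      linarith
  have hev2 : ∀ᶠ ε in nhdsWithin (0:ℝ) (Set.Ioi 0),
      dotd a (uε ε) < v.1 * (uε ε).1 + v.2 * (uε ε).2 := by
    have htend : Tendsto (fun ε : ℝ => v.1 * (uε ε).1 + v.2 * (uε ε).2 - dotd a (uε ε)) (nhds 0)
        (nhds (v.1 * u₀.1 + v.2 * u₀.2 - dotd a u₀)) := by
      simp only [hdot]
      simp only [huε]
      have : Continuous (fun ε : ℝ => v.1 * (u₀.1 + ε * w.1) + v.2 * (u₀.2 + ε * w.2)
          - (dotd a u₀ + ε * dotd a w)) := by continuity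
      have := this.tendsto 0
      simpa using this
    have h0 : (0:ℝ) < v.1 * u₀.1 + v.2 * u₀.2 - dotd a u₀ := by
      have := hsep a haS; linarith
    have := htend.eventually_const_lt h0
    filter_upwards [this.filter_mono nhdsWithin_le_nhds] with ε hε
    linarith
  have hall : ∀ᶠ ε in nhdsWithin (0:ℝ) (Set.Ioi 0),
      (∀ d ∈ S, d ≠ a → dotd d (uε ε) < dotd a (uε ε)) ∧
        dotd a (uε ε) < v.1 * (uε ε).1 + v.2 * (uε ε).2 :=
    ((eventually_all_finset S).2 hev1).and hev2
  obtain ⟨ε, hε1, hε2⟩ := hall.exists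
  exact ⟨uε ε, a, haS, hε1, hε2⟩

end RonkinAux

set_option maxHeartbeats 1600000 in
/-- Every subgradient of the Ronkin function lies in the Newton polygon. -/
theorem ronkin_subgradient_mem_newtonPolygon (f : MvPolynomial (Fin 2) ℂ) (hf : f ≠ 0)
    (x v : ℝ × ℝ)
    (h : ∀ y : ℝ × ℝ, ronkin f y ≥ ronkin f x + (v.1 * (y.1 - x.1) + v.2 * (y.2 - x.2))) :
    v ∈ newtonPolygon f := by
  classical
  open Filter in
  by_contra hv
  have hS : f.support.Nonempty := MvPolynomial.support_nonempty.2 hf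
  -- separation
  have hfin : ((fun d : Fin 2 →₀ ℕ => ((d 0 : ℝ), (d 1 : ℝ))) ''
      (f.support : Set (Fin 2 →₀ ℕ))).Finite := (f.support.finite_toSet).image _
  obtain ⟨u₀, hu₀⟩ := sep_lemma (newtonPolygon f) (convex_convexHull ℝ _)
    (hfin.isClosed_convexHull ℝ) v hv
  have hsep0 : ∀ d ∈ f.support, dotd d u₀ < v.1 * u₀.1 + v.2 * u₀.2 := by
    intro d hd
    have hmem : ((d 0 : ℝ), (d 1 : ℝ)) ∈ newtonPolygon f :=
      subset_convexHull ℝ _ ⟨d, hd, rfl⟩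
    have := hu₀ _ hmem
    simpa [dotd] using this
  obtain ⟨u, a, haS, hmax, hsep⟩ := exists_dir f.support hS v u₀ hsep0
  set Vu := v.1 * u.1 + v.2 * u.2 with hVu
  set ms := dotd a u with hms
  have hmsVu : ms < Vu := hsep
  have hmaxle : ∀ d ∈ f.support, dotd d u ≤ ms := by
    intro d hd
    by_cases hda : d = a
    · rw [hda]
    · exact (hmax d hd hda).le
  set C := ∑ d ∈ f.support, ‖MvPolynomial.coeff d f‖ with hC
  have hCpos : 0 < C := by
    refine Finset.sum_pos (fun d hd => ?_) hS
    exact norm_pos_iff.2 (MvPolynomial.mem_support_iff.1 hd)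
  set Hx := f.support.sup' hS (fun d => dotd d x) with hHx
  set ca := ‖MvPolynomial.coeff a f‖ with hca
  have hcapos : 0 < ca := norm_pos_iff.2 (MvPolynomial.mem_support_iff.1 haS)
  set n := (f.support.erase a).card with hn
  set A : ℝ → ℝ := fun t => ca * Real.exp (dotd a x + t * ms) with hA
  have hApos : ∀ t, 0 < A t := fun t => by rw [hA]; positivity
  set Y : ℝ → ℝ × ℝ := fun t => (x.1 + t * u.1, x.2 + t * u.2) with hY
  have hdotY : ∀ d t, dotd d (Y t) = dotd d x + t * dotd d u := by
    intro d t; simp only [dotd, hY]; ring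
  -- eventually, each non-leading term is small
  have hev1 : ∀ d ∈ f.support.erase a, ∀ᶠ t in atTop,
      ‖MvPolynomial.coeff d f‖ * Real.exp (dotd d x + t * dotd d u)
        ≤ A t / (2 * ((n : ℝ) + 1)) := by
    intro d hd
    have hdS : d ∈ f.support := Finset.mem_of_mem_erase hd
    have hda : d ≠ a := Finset.ne_of_mem_erase hd
    set cd := ‖MvPolynomial.coeff d f‖ with hcd
    have hcdpos : 0 < cd := norm_pos_iff.2 (MvPolynomial.mem_support_iff.1 hdS)
    set r := dotd d u with hr
    have hrms : r < ms := hmax d hdS hda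
    set K := ca * Real.exp (dotd a x) / (2 * ((n : ℝ) + 1) * cd * Real.exp (dotd d x)) with hK
    have hKpos : 0 < K := by rw [hK]; positivity
    have htend : Tendsto (fun t : ℝ => t * (r - ms)) atTop atBot :=
      Filter.tendsto_id.atTop_mul_const_of_neg (by linarith)
    filter_upwards [htend.eventually_le_atBot (Real.log K)] with t ht
    have hexp : Real.exp (t * r - t * ms) ≤ K := by
      have : Real.exp (t * (r - ms)) ≤ Real.exp (Real.log K) := Real.exp_le_exp.2 ht
      rw [Real.exp_log hKpos] at this
      calc Real.exp (t * r - t * ms) = Real.exp (t * (r - ms)) := by ring_nf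
        _ ≤ K := this
    rw [hA, le_div_iff₀ (by positivity : (0:ℝ) < 2 * ((n : ℝ) + 1))]
    have hKmul : K * (2 * ((n : ℝ) + 1) * cd * Real.exp (dotd d x))
        = ca * Real.exp (dotd a x) := by
      rw [hK]
      field_simp
    have e1 : Real.exp (dotd d x + t * r)
        = Real.exp (dotd d x) * (Real.exp (t * r - t * ms) * Real.exp (t * ms)) := by
      rw [← Real.exp_add, ← Real.exp_add]
      ring_nf
    have e2 : Real.exp (dotd a x + t * ms) = Real.exp (dotd a x) * Real.exp (t * ms) :=
      Real.exp_add _ _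
    calc cd * Real.exp (dotd d x + t * r) * (2 * ((n : ℝ) + 1))
        = (2 * ((n : ℝ) + 1) * cd * Real.exp (dotd d x)) * Real.exp (t * r - t * ms)
            * Real.exp (t * ms) := by
          rw [e1]; ring
      _ ≤ (2 * ((n : ℝ) + 1) * cd * Real.exp (dotd d x)) * K * Real.exp (t * ms) := by
          have hpos1 : (0:ℝ) < 2 * ((n : ℝ) + 1) * cd * Real.exp (dotd d x) := by positivity
          have := mul_le_mul_of_nonneg_left hexp hpos1.le
          exact mul_le_mul_of_nonneg_right this (Real.exp_pos _).le
      _ = ca * Real.exp (dotd a x + t * ms) := by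
          rw [e2]; linear_combination Real.exp (t * ms) * hKmul
  -- eventually the linear gap dominates
  have hev2 : ∀ᶠ t in atTop,
      Real.log C + Hx - ronkin f x < t * (Vu - ms) := by
    have htend : Tendsto (fun t : ℝ => t * (Vu - ms)) atTop atTop :=
      Filter.tendsto_id.atTop_mul_const (by linarith)
    exact htend.eventually_gt_atTop _
  have hev0 : ∀ᶠ t in atTop, (0:ℝ) ≤ t := eventually_ge_atTop 0
  obtain ⟨t, hP1, hP2, hP0⟩ :=
    (((eventually_all_finset (f.support.erase a)).2 hev1).and (hev2.and hev0)).exists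
  -- bounds on the torus over Y t
  have habs1 : ∀ θ : ℝ × ℝ, ‖Complex.exp (((Y t).1 : ℂ) + θ.1 * Complex.I)‖
      = Real.exp (Y t).1 := fun θ => abs_exp_arg _ _
  have habs2 : ∀ θ : ℝ × ℝ, ‖Complex.exp (((Y t).2 : ℂ) + θ.2 * Complex.I)‖
      = Real.exp (Y t).2 := fun θ => abs_exp_arg _ _
  -- the sum of non-leading terms is at most A t / 2
  have hRsum : ∑ d ∈ f.support.erase a,
      ‖MvPolynomial.coeff d f‖ * Real.exp (dotd d (Y t)) ≤ A t / 2 := by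
    have hle : ∀ d ∈ f.support.erase a,
        ‖MvPolynomial.coeff d f‖ * Real.exp (dotd d (Y t))
          ≤ A t / (2 * ((n : ℝ) + 1)) := by
      intro d hd
      rw [hdotY]
      exact hP1 d hd
    have := Finset.sum_le_card_nsmul _ _ _ hle
    rw [nsmul_eq_mul] at this
    have hfrac : (n : ℝ) * (A t / (2 * ((n : ℝ) + 1))) ≤ A t / 2 := by
      have key : A t / 2 = ((n : ℝ) + 1) * (A t / (2 * ((n : ℝ) + 1))) := by
        field_simp
      rw [key]
      refine mul_le_mul_of_nonneg_right ?_ (by positivity)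
      linarith [Nat.cast_nonneg (α := ℝ) n]
    linarith
  -- lower bound for |f| on the torus over Y t
  have hlowf : ∀ θ : ℝ × ℝ, A t / 2 ≤ ‖mvEval f
      (Complex.exp ((Y t).1 + θ.1 * Complex.I)) (Complex.exp ((Y t).2 + θ.2 * Complex.I))‖ := by
    intro θ
    have hge := abs_eval_ge f a haS (Y t) _ _ (habs1 θ) (habs2 θ)
    have hAeq : ca * Real.exp (dotd a (Y t)) = A t := by
      rw [hdotY]
    rw [hAeq] at hge
    linarith [hRsum]
  -- upper bound for |f| on the torus over Y t
  have hupf : ∀ θ : ℝ × ℝ, ‖mvEval f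
      (Complex.exp ((Y t).1 + θ.1 * Complex.I)) (Complex.exp ((Y t).2 + θ.2 * Complex.I))‖
      ≤ C * Real.exp (Hx + t * ms) := by
    intro θ
    refine le_trans (abs_eval_le f (Y t) _ _ (habs1 θ) (habs2 θ)) ?_
    calc ∑ d ∈ f.support, ‖MvPolynomial.coeff d f‖ * Real.exp (dotd d (Y t))
        ≤ ∑ d ∈ f.support, ‖MvPolynomial.coeff d f‖ * Real.exp (Hx + t * ms) := by
          refine Finset.sum_le_sum fun d hd => ?_
          refine mul_le_mul_of_nonneg_left (Real.exp_le_exp.2 ?_) (norm_nonneg _)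
          rw [hdotY]
          have h1 : dotd d x ≤ Hx := Finset.le_sup' (fun d => dotd d x) hd
          have h2 : t * dotd d u ≤ t * ms := mul_le_mul_of_nonneg_left (hmaxle d hd) hP0
          linarith
      _ = C * Real.exp (Hx + t * ms) := by rw [← Finset.sum_mul]
  -- bounds on integrand
  set L := Real.log (A t / 2) with hL
  set U := Real.log C + (Hx + t * ms) with hU
  have hLB : ∀ θ ∈ rbox, L ≤ rInt f (Y t) θ := by
    intro θ _
    rw [rInt]
    exact Real.log_le_log (by positivity) (hlowf θ)
  have hUB : ∀ θ ∈ rbox, rInt f (Y t) θ ≤ U := by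
    intro θ _
    rw [rInt]
    have h1 : Real.log (‖mvEval f (Complex.exp ((Y t).1 + θ.1 * Complex.I))
        (Complex.exp ((Y t).2 + θ.2 * Complex.I))‖) ≤ Real.log (C * Real.exp (Hx + t * ms)) :=
      Real.log_le_log (lt_of_lt_of_le (by positivity) (hlowf θ)) (hupf θ)
    rwa [Real.log_mul (ne_of_gt hCpos) (Real.exp_ne_zero _), Real.log_exp] at h1
  have hint := rInt_integrableOn f (Y t) L U hLB hUB
  have hron : ronkin f (Y t) ≤ U := ronkin_le f (Y t) U hint hUB
  have hh := h (Y t)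
  have hy1 : (Y t).1 - x.1 = t * u.1 := by simp [hY]
  have hy2 : (Y t).2 - x.2 = t * u.2 := by simp [hY]
  rw [hy1, hy2] at hh
  have hlin : v.1 * (t * u.1) + v.2 * (t * u.2) = t * Vu := by rw [hVu]; ring
  rw [hlin] at hh
  have hcontr : ronkin f x + t * Vu ≤ Real.log C + (Hx + t * ms) := le_trans hh hron
  nlinarith [hP2]
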